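/- arXiv:1405.0875 — 2 statements merged into one kernel-verified Lean document; each statement's English description precedes it below -/
import Mathlib

section
/- Let 𝒰 be a real Hilbert space, (𝒫, μ) a measure space with μ finite, α > 0, and J : 𝒰 → 𝒫 → ℝ such that for each p the map v ↦ J(v;p) is strongly convex with constant α, and such that p ↦ J(v(p);p) is μ-integrable for every v ∈ L²(𝒫;𝒰). Then the functional J_𝒫 : L²(𝒫;𝒰) → ℝ defined by J_𝒫(v) = ∫_𝒫 J(v(p);p) μ(dp) is strongly convex with the same constant α with respect to the L²(𝒫;𝒰) norm: for all v, w ∈ L²(𝒫;𝒰) and t ∈ [0,1], J_𝒫(tv+(1−t)w) ≤ t·J_𝒫(v) + (1−t)·J_𝒫(w) − (α/2)·t(1−t)·‖v−w‖²_{L²(𝒫;𝒰)}. -/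
open MeasureTheory

/-- If `v ↦ J(v;p)` is strongly convex with constant `α` uniformly in `p` and
`p ↦ J(v(p);p)` is integrable for every `v ∈ L²(𝒫;𝒰)`, then the integrated
functional `J_𝒫(v) = ∫ J(v(p);p) dμ` is strongly convex with the same constant
`α` with respect to the `L²(𝒫;𝒰)` norm. -/
theorem integrated_functional_strongly_convex
    {U : Type*} [NormedAddCommGroup U] [InnerProductSpace ℝ U] [CompleteSpace U]
    {P : Type*} [MeasurableSpace P] (μ : Measure P) [IsFiniteMeasure μ]
    (α : ℝ) (hα : 0 < α) (J : U → P → ℝ)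
    (hconv : ∀ (p : P) (v w : U), ∀ t ∈ Set.Icc (0 : ℝ) 1,
      J (t • v + (1 - t) • w) p ≤
        t * J v p + (1 - t) * J w p - α / 2 * (t * (1 - t)) * ‖v - w‖ ^ 2)
    (hint : ∀ v : P → U, MemLp v 2 μ → Integrable (fun p => J (v p) p) μ) :
    ∀ v w : P → U, MemLp v 2 μ → MemLp w 2 μ → ∀ t ∈ Set.Icc (0 : ℝ) 1,
      (∫ p, J (t • v p + (1 - t) • w p) p ∂μ) ≤
        t * (∫ p, J (v p) p ∂μ) + (1 - t) * (∫ p, J (w p) p ∂μ)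
          - α / 2 * (t * (1 - t)) * ∫ p, ‖v p - w p‖ ^ 2 ∂μ := by
  intro v w hv hw t ht
  have hcomb : MemLp (fun p => t • v p + (1 - t) • w p) 2 μ :=
    (hv.const_smul t).add (hw.const_smul (1 - t))
  have h1 : Integrable (fun p => J (t • v p + (1 - t) • w p) p) μ :=
    hint _ hcomb
  have hvw : MemLp (fun p => v p - w p) 2 μ := hv.sub hw
  have hsq : Integrable (fun p => ‖v p - w p‖ ^ 2) μ := by
    have := hvw.integrable_norm_rpow (by norm_num) (by norm_num)
    simpa [ENNReal.toReal_ofNat, Real.rpow_natCast] using this.congr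
      (Filter.Eventually.of_forall fun p => by
        rw [← Real.rpow_natCast]
        norm_num)
  have hJv : Integrable (fun p => J (v p) p) μ := hint _ hv
  have hJw : Integrable (fun p => J (w p) p) μ := hint _ hw
  have h2 : Integrable (fun p =>
      t * J (v p) p + (1 - t) * J (w p) p
        - α / 2 * (t * (1 - t)) * ‖v p - w p‖ ^ 2) μ :=
    (((hJv.const_mul t).add (hJw.const_mul (1 - t))).sub
      (hsq.const_mul _))
  calc (∫ p, J (t • v p + (1 - t) • w p) p ∂μ)
      ≤ ∫ p, (t * J (v p) p + (1 - t) * J (w p) p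
          - α / 2 * (t * (1 - t)) * ‖v p - w p‖ ^ 2) ∂μ :=
        integral_mono h1 h2 fun p => hconv p (v p) (w p) t ht
    _ = t * (∫ p, J (v p) p ∂μ) + (1 - t) * (∫ p, J (w p) p ∂μ)
          - α / 2 * (t * (1 - t)) * ∫ p, ‖v p - w p‖ ^ 2 ∂μ := by
        have ha : Integrable (fun p => t * J (v p) p + (1 - t) * J (w p) p) μ :=
          (hJv.const_mul t).add (hJw.const_mul (1 - t))
        rw [integral_sub ha (hsq.const_mul _),
          integral_add (hJv.const_mul t) (hJw.const_mul (1 - t)),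
          integral_const_mul, integral_const_mul, integral_const_mul]
end

section
/- Let 𝒰 be a real Hilbert space, (𝒫, μ) a measure space with μ finite, α > 0, and J : 𝒰 → 𝒫 → ℝ such that for each p, v ↦ J(v;p) is Fréchet differentiable with gradient ∇J(v;p), strongly convex with constant α uniformly in p, and p ↦ J(v(p);p) is μ-integrable for every v ∈ L²(𝒫;𝒰). Let λ₁, …, λ_r ∈ L²(μ;ℝ) be linearly independent and write F_r(λ,v)(p) = Σ_i λ_i(p) • v_i. Then there exists a unique minimizer v* = (v*₁,…,v*_r) ∈ 𝒰^r of (v₁,…,v_r) ↦ ∫_𝒫 J(F_r(λ,v)(p);p) μ(dp), and v* is characterized by the equations ∫_𝒫 ⟨∇J(F_r(λ,v*)(p);p), F_r(λ,δv)(p)⟩ μ(dp) = 0 for all δv = (δv₁,…,δv_r) ∈ 𝒰^r. -/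
open MeasureTheory Set Filter
open scoped RealInnerProductSpace Topology

section AMSAux
variable {U : Type*} [NormedAddCommGroup U] [InnerProductSpace ℝ U] [CompleteSpace U]

variable {U : Type*} [NormedAddCommGroup U] [InnerProductSpace ℝ U] [CompleteSpace U]

lemma ams_dirDeriv {f : U → ℝ} {G x : U} (hf : HasGradientAt f G x) (z : U) :
    HasDerivAt (fun t : ℝ => f (x + t • z)) ⟪G, z⟫ 0 := by
  have h1 : HasDerivAt (fun t : ℝ => x + t • z) z 0 := by
    simpa using ((hasDerivAt_id (0 : ℝ)).smul_const z).const_add x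
  have h2 : HasFDerivAt f (InnerProductSpace.toDual ℝ U G) (x + (0 : ℝ) • z) := by
    simpa using hf.hasFDerivAt
  have := h2.comp_hasDerivAt 0 h1
  exact this

section P1
variable {α : ℝ} (hα : 0 < α) {f : U → ℝ}
  (hc : ∀ v w : U, ∀ t ∈ Set.Icc (0 : ℝ) 1,
    f (t • v + (1 - t) • w) ≤ t * f v + (1 - t) * f w - α / 2 * (t * (1 - t)) * ‖v - w‖ ^ 2)

include hc in
lemma ams_comb (x z : U) {t : ℝ} (ht : 0 < t) (ht1 : t ≤ 1) :
    f (x + t • z) ≤ f x + t * (f (x + z) - f x) - α / 2 * (t * (1 - t)) * ‖z‖ ^ 2 := by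
  have h := hc (x + z) x t ⟨le_of_lt ht, ht1⟩
  have e1 : t • (x + z) + (1 - t) • x = x + t • z := by
    rw [smul_add, sub_smul, one_smul]; abel
  have e2 : x + z - x = z := by abel
  rw [e1, e2] at h
  nlinarith [h]

include hα hc in
lemma ams_grad_ineq {G : U} (x : U) (hf : HasGradientAt f G x) (z : U) :
    ⟪G, z⟫ ≤ f (x + z) - f x - α / 2 * ‖z‖ ^ 2 := by
  have hd := ams_dirDeriv hf z
  have hslope := hasDerivAt_iff_tendsto_slope.1 hd
  -- restrict to right neighborhood
  have hsub : 𝓝[>] (0 : ℝ) ≤ 𝓝[≠] (0 : ℝ) := nhdsWithin_mono _ (by intro a ha; exact ne_of_gt ha)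
  have hslope' : Tendsto (slope (fun t : ℝ => f (x + t • z)) 0) (𝓝[>] 0) (𝓝 ⟪G, z⟫) :=
    hslope.mono_left hsub
  have hbnd : ∀ᶠ t in 𝓝[>] (0 : ℝ),
      slope (fun t : ℝ => f (x + t • z)) 0 t ≤ f (x + z) - f x - α / 2 * (1 - t) * ‖z‖ ^ 2 := by
    filter_upwards [Ioc_mem_nhdsGT_of_mem (by constructor <;> norm_num : (0:ℝ) ∈ Ico (0:ℝ) 1)]
      with t ht
    have h := ams_comb hc x z ht.1 ht.2
    rw [slope_def_field]
    simp only [zero_smul, add_zero, sub_zero]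
    rw [div_le_iff₀ ht.1]
    nlinarith [h]
  have hlim2 : Tendsto (fun t : ℝ => f (x + z) - f x - α / 2 * (1 - t) * ‖z‖ ^ 2) (𝓝[>] 0)
      (𝓝 (f (x + z) - f x - α / 2 * ‖z‖ ^ 2)) := by
    have : Tendsto (fun t : ℝ => f (x + z) - f x - α / 2 * (1 - t) * ‖z‖ ^ 2) (𝓝 0)
        (𝓝 (f (x + z) - f x - α / 2 * (1 - 0) * ‖z‖ ^ 2)) := by
      apply Tendsto.const_sub
      exact (((tendsto_const_nhds).sub tendsto_id).const_mul _).mul_const _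
    simpa using this.mono_left nhdsWithin_le_nhds
  exact le_of_tendsto_of_tendsto hslope' hlim2 hbnd



end P1

lemma ams_tendsto_quot {f : U → ℝ} {G x : U} (hf : HasGradientAt f G x) (z : U) :
    Tendsto (fun n : ℕ => ((n : ℝ) + 1) * (f (x + ((n : ℝ) + 1)⁻¹ • z) - f x))
      atTop (𝓝 ⟪G, z⟫) := by
  have hd := ams_dirDeriv hf z
  have hslope := hasDerivAt_iff_tendsto_slope.1 hd
  have ht : Tendsto (fun n : ℕ => ((n : ℝ) + 1)⁻¹) atTop (𝓝[≠] (0 : ℝ)) := by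
    apply tendsto_nhdsWithin_of_tendsto_nhds_of_eventually_within
    · exact tendsto_one_div_add_atTop_nhds_zero_nat.congr (by intro n; simp [one_div])
    · filter_upwards with n
      have : (0:ℝ) < ((n : ℝ) + 1)⁻¹ := by positivity
      exact ne_of_gt this
  have := hslope.comp ht
  refine this.congr (fun n => ?_)
  have hpos : ((n : ℝ) + 1) ≠ 0 := by positivity
  simp only [Function.comp, slope_def_field]
  rw [zero_smul, add_zero, sub_zero, div_eq_inv_mul, inv_inv]



section MeasAux
variable {P : Type*} [MeasurableSpace P] {μ : Measure P} [IsFiniteMeasure μ]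
variable {α : ℝ} {J : U → P → ℝ} {g : U → P → U}
variable (hα : 0 < α)
  (hgrad : ∀ (p : P) (v : U), HasGradientAt (fun x => J x p) (g v p) v)
  (hconv : ∀ (p : P) (v w : U), ∀ t ∈ Set.Icc (0 : ℝ) 1,
    J (t • v + (1 - t) • w) p ≤
      t * J v p + (1 - t) * J w p - α / 2 * (t * (1 - t)) * ‖v - w‖ ^ 2)
  (hint : ∀ u : P → U, MemLp u 2 μ → Integrable (fun p => J (u p) p) μ)

include hα hconv hgrad in
lemma ams_grad_ineq' (p : P) (x z : U) :
    ⟪g x p, z⟫ ≤ J (x + z) p - J x p - α / 2 * ‖z‖ ^ 2 :=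
  ams_grad_ineq hα (hconv p) x (hgrad p x) z

include hα hconv hgrad in
lemma ams_plain (p : P) (x z : U) : ⟪g x p, z⟫ ≤ J (x + z) p - J x p := by
  have := ams_grad_ineq' hα hgrad hconv p x z
  nlinarith [sq_nonneg ‖z‖, hα]

include hα hconv hgrad in
lemma ams_lower (p : P) (x z : U) : J x p - J (x - z) p ≤ ⟪g x p, z⟫ := by
  have := ams_plain hα hgrad hconv p x (-z)
  have h2 : ⟪g x p, -z⟫ = -⟪g x p, z⟫ := by rw [inner_neg_right]
  rw [h2] at this
  have : J x p - J (x + -z) p ≤ ⟪g x p, z⟫ := by linarith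
  simpa [sub_eq_add_neg] using this

include hα hconv hgrad in
lemma ams_quot_bounds (p : P) (x z : U) (n : ℕ) :
    ⟪g x p, z⟫ ≤ ((n : ℝ) + 1) * (J (x + ((n : ℝ) + 1)⁻¹ • z) p - J x p) ∧
    ((n : ℝ) + 1) * (J (x + ((n : ℝ) + 1)⁻¹ • z) p - J x p) ≤ J (x + z) p - J x p := by
  have hn : (0:ℝ) < (n : ℝ) + 1 := by positivity
  have htpos : (0:ℝ) < ((n : ℝ) + 1)⁻¹ := by positivity
  have ht1 : ((n : ℝ) + 1)⁻¹ ≤ 1 := by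
    rw [inv_le_one_iff₀]; right; linarith
  constructor
  · have := ams_plain hα hgrad hconv p x (((n : ℝ) + 1)⁻¹ • z)
    have h2 : ⟪g x p, ((n : ℝ) + 1)⁻¹ • z⟫ = ((n : ℝ) + 1)⁻¹ * ⟪g x p, z⟫ :=
      real_inner_smul_right _ _ _
    rw [h2] at this
    calc ⟪g x p, z⟫ = ((n:ℝ)+1) * (((n : ℝ) + 1)⁻¹ * ⟪g x p, z⟫) := by
          field_simp
      _ ≤ ((n : ℝ) + 1) * (J (x + ((n : ℝ) + 1)⁻¹ • z) p - J x p) := by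
          apply mul_le_mul_of_nonneg_left this (le_of_lt hn)
  · -- convexity combination
    have h := hconv p (x + z) x (((n : ℝ) + 1)⁻¹) ⟨le_of_lt htpos, ht1⟩
    have e1 : ((n : ℝ) + 1)⁻¹ • (x + z) + (1 - ((n : ℝ) + 1)⁻¹) • x
        = x + ((n : ℝ) + 1)⁻¹ • z := by
      rw [smul_add, sub_smul, one_smul]; abel
    have e2 : x + z - x = z := by abel
    rw [e1, e2] at h
    have hα2 : 0 ≤ α / 2 * ((((n : ℝ) + 1)⁻¹) * (1 - ((n : ℝ) + 1)⁻¹)) * ‖z‖^2 := by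
      have : 0 ≤ 1 - ((n : ℝ) + 1)⁻¹ := by linarith
      positivity
    have hstep : J (x + ((n : ℝ) + 1)⁻¹ • z) p - J x p
        ≤ ((n:ℝ)+1)⁻¹ * (J (x + z) p - J x p) := by nlinarith [h, hα2]
    calc ((n : ℝ) + 1) * (J (x + ((n : ℝ) + 1)⁻¹ • z) p - J x p)
        ≤ ((n : ℝ) + 1) * (((n:ℝ)+1)⁻¹ * (J (x + z) p - J x p)) :=
          mul_le_mul_of_nonneg_left hstep hn.le
      _ = J (x + z) p - J x p := by field_simp

include hgrad hint in

lemma ams_inner_meas {u w : P → U} (hu : MemLp u 2 μ) (hw : MemLp w 2 μ) :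
    AEStronglyMeasurable (fun p => ⟪g (u p) p, w p⟫) μ := by
  apply aestronglyMeasurable_of_tendsto_ae (μ := μ) atTop
    (f := fun (n : ℕ) (p : P) =>
      ((n : ℝ) + 1) * (J (u p + ((n : ℝ) + 1)⁻¹ • w p) p - J (u p) p))
  · intro n
    have h1 : MemLp (fun p => u p + ((n : ℝ) + 1)⁻¹ • w p) 2 μ := by
      exact hu.add (hw.const_smul _)
    exact (((hint _ h1).sub (hint _ hu)).aestronglyMeasurable.const_mul _)
  · filter_upwards with p
    exact ams_tendsto_quot (hgrad p (u p)) (w p)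

include hα hgrad hconv hint in
lemma ams_inner_int {u w : P → U} (hu : MemLp u 2 μ) (hw : MemLp w 2 μ) :
    Integrable (fun p => ⟪g (u p) p, w p⟫) μ := by
  have hb : Integrable (fun p =>
      |J (u p + w p) p - J (u p) p| + |J (u p) p - J (u p - w p) p|) μ := by
    exact (((hint _ (hu.add hw)).sub (hint _ hu)).abs.add
      (((hint _ hu).sub (hint _ (hu.sub hw))).abs)
      )
  apply Integrable.mono' hb (ams_inner_meas hgrad hint hu hw)
  filter_upwards with p
  have h1 := ams_plain hα hgrad hconv p (u p) (w p)
  have h2 := ams_lower hα hgrad hconv p (u p) (w p)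
  rw [Real.norm_eq_abs]
  rcases abs_cases (⟪g (u p) p, w p⟫ : ℝ) with ⟨he, _⟩ | ⟨he, _⟩ <;>
    · rw [he]
      have := le_abs_self (J (u p + w p) p - J (u p) p)
      have := neg_abs_le (J (u p) p - J (u p - w p) p)
      have := le_abs_self (J (u p) p - J (u p - w p) p)
      have := neg_abs_le (J (u p + w p) p - J (u p) p)
      linarith

include hα hgrad hconv hint in

lemma ams_functional_bound {u : P → U} (hu : MemLp u 2 μ) {θ : P → ℝ} (hθ : MemLp θ 2 μ) :
    ∃ C : ℝ, ∀ c : U, |∫ p, θ p * ⟪g (u p) p, c⟫ ∂μ| ≤ C * ‖c‖ := by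
  classical
  by_contra hcon
  push_neg at hcon
  -- extract unit vectors with large functional values
  have hunit : ∀ n : ℕ, ∃ en : U, ‖en‖ ≤ 1 ∧ (n : ℝ) < |∫ p, θ p * ⟪g (u p) p, en⟫ ∂μ| := by
    intro n
    obtain ⟨c, hc⟩ := hcon n
    have hcne : c ≠ 0 := by
      rintro rfl
      simp at hc
    refine ⟨‖c‖⁻¹ • c, ?_, ?_⟩
    · rw [norm_smul, norm_inv, norm_norm]
      rw [inv_mul_cancel₀ (norm_ne_zero_iff.2 hcne)]
    · have h1 : ∀ p, θ p * ⟪g (u p) p, ‖c‖⁻¹ • c⟫ = ‖c‖⁻¹ * (θ p * ⟪g (u p) p, c⟫) := by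
        intro p; rw [real_inner_smul_right]; ring
      have h2 : (∫ p, θ p * ⟪g (u p) p, ‖c‖⁻¹ • c⟫ ∂μ)
          = ‖c‖⁻¹ * ∫ p, θ p * ⟪g (u p) p, c⟫ ∂μ := by
        simp_rw [h1]
        rw [integral_const_mul]
      rw [h2, abs_mul, abs_of_nonneg (inv_nonneg.2 (norm_nonneg c))]
      have hcpos : 0 < ‖c‖ := norm_pos_iff.2 hcne
      calc (n : ℝ) = ‖c‖⁻¹ * ((n:ℝ) * ‖c‖) := by field_simp
          _ < ‖c‖⁻¹ * |∫ p, θ p * ⟪g (u p) p, c⟫ ∂μ| := by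
              apply mul_lt_mul_of_pos_left hc (by positivity)
  choose e he hbig using hunit
  -- measurable representatives of the inner products
  have hf : ∀ n : ℕ, AEStronglyMeasurable (fun p => ⟪g (u p) p, e n⟫) μ := fun n =>
    ams_inner_meas hgrad hint hu (memLp_const (e n))
  set gm : ℕ → P → ℝ := fun n => (hf n).mk _ with hgm
  have hgmmeas : ∀ n, Measurable (gm n) := fun n => ((hf n).stronglyMeasurable_mk).measurable
  have hgmae : ∀ᵐ p ∂μ, ∀ n, ⟪g (u p) p, e n⟫ = gm n p := by
    rw [ae_all_iff]; intro n; exact (hf n).ae_eq_mk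
  set N : P → ℝ := fun p => ⨆ n, |gm n p| with hN
  have hNmeas : Measurable N := Measurable.iSup (fun n => (hgmmeas n).abs)
  -- total selection predicate
  have htot : ∀ p, ∃ n, N p ≤ 2 * |gm n p| := by
    intro p
    by_cases hb : BddAbove (Set.range fun n => |gm n p|)
    · rcases le_or_gt (N p) 0 with h | h
      · exact ⟨0, le_trans h (by positivity)⟩
      · have : N p / 2 < N p := by linarith
        obtain ⟨n, hn⟩ := exists_lt_of_lt_ciSup
          (show N p / 2 < ⨆ n, |gm n p| from this)
        exact ⟨n, by linarith⟩
    · refine ⟨0, ?_⟩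
      have : N p = 0 := by
        simp only [hN]; exact Real.iSup_of_not_bddAbove hb
      rw [this]; positivity
  have hpredm : ∀ n, MeasurableSet {p | N p ≤ 2 * |gm n p|} :=
    fun n => measurableSet_le hNmeas (((hgmmeas n).abs).const_mul 2)
  set k : P → ℕ := fun p => Nat.find (htot p) with hk
  have hkmeas : Measurable k :=
    Measurable.find (f := fun n (_ : P) => n) (fun _ => measurable_const) hpredm htot
  have hgkmeas : Measurable (fun p => gm (k p) p) :=
    Measurable.find (f := gm) hgmmeas hpredm htot
  have hkspec : ∀ p, N p ≤ 2 * |gm (k p) p| := fun p => Nat.find_spec (htot p)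
  -- sign
  set σ : P → ℝ := fun p => if 0 ≤ gm (k p) p then (1:ℝ) else -1 with hσ
  have hσmeas : Measurable σ :=
    Measurable.ite (measurableSet_le measurable_const hgkmeas) measurable_const measurable_const
  have hσabs : ∀ p, |σ p| = 1 := by
    intro p; by_cases h : 0 ≤ gm (k p) p <;> simp [hσ, h]
  -- E = e ∘ k strongly measurable
  have hEsm : StronglyMeasurable (fun p => e (k p)) := by
    have hsm : ∀ m : ℕ, StronglyMeasurable (fun p => if k p < m then e (k p) else 0) := by
      intro m
      induction m with
      | zero => simpa using stronglyMeasurable_const (b := (0 : U))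
      | succ m ih =>
        have : (fun p => if k p < m + 1 then e (k p) else 0)
            = fun p => if k p = m then e m else (if k p < m then e (k p) else 0) := by
          funext p
          by_cases h1 : k p = m
          · simp [h1]
          · by_cases h2 : k p < m
            · simp [h1, h2, Nat.lt_succ_of_lt h2]
            · have : ¬ k p < m + 1 := by omega
              simp [h1, h2, this]
        rw [this]
        exact StronglyMeasurable.ite (hkmeas (measurableSet_singleton m))
          stronglyMeasurable_const ih
    apply stronglyMeasurable_of_tendsto atTop hsm
    rw [tendsto_pi_nhds]
    intro p
    apply tendsto_atTop_of_eventually_const (i₀ := k p + 1)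
    intro m hm
    simp [Nat.lt_of_lt_of_le (Nat.lt_succ_self (k p)) hm]
  set c : P → U := fun p => σ p • e (k p) with hc
  have hcsm : StronglyMeasurable c := (hσmeas.stronglyMeasurable).smul hEsm
  have hcnorm : ∀ p, ‖c p‖ ≤ 1 := by
    intro p
    show ‖σ p • e (k p)‖ ≤ 1
    rw [norm_smul, Real.norm_eq_abs, hσabs]
    simpa using he (k p)
  -- w = |θ| • c
  set w : P → U := fun p => |θ p| • c p with hw
  have hwmeas : AEStronglyMeasurable w μ :=
    (hθ.aestronglyMeasurable.norm.congr (by filter_upwards with p using (Real.norm_eq_abs _))).smul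
      hcsm.aestronglyMeasurable
  have hwmem : MemLp w 2 μ := by
    apply MemLp.of_le hθ hwmeas
    filter_upwards with p
    show ‖|θ p| • c p‖ ≤ ‖θ p‖
    rw [norm_smul, Real.norm_eq_abs, abs_abs, Real.norm_eq_abs]
    nlinarith [hcnorm p, abs_nonneg (θ p)]
  -- dominating function
  set D : P → ℝ := fun p => 2 * (J (u p + w p) p - J (u p) p) with hD
  have hDint : Integrable D μ := (((hint _ (hu.add hwmem)).sub (hint _ hu)).const_mul 2)
  -- a.e. inequality : |θ| * N ≤ D
  have hae1 : ∀ᵐ p ∂μ, |θ p| * N p ≤ D p ∧ 0 ≤ N p := by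
    filter_upwards [hgmae] with p hp
    have hbdd : BddAbove (Set.range fun n => |gm n p|) := by
      refine ⟨‖g (u p) p‖, ?_⟩
      rintro x ⟨n, rfl⟩
      show |gm n p| ≤ ‖g (u p) p‖
      rw [← hp n]
      calc |⟪g (u p) p, e n⟫| ≤ ‖g (u p) p‖ * ‖e n‖ := abs_real_inner_le_norm _ _
        _ ≤ ‖g (u p) p‖ * 1 := by
            apply mul_le_mul_of_nonneg_left (he n) (norm_nonneg _)
        _ = _ := mul_one _
    have hN0 : 0 ≤ N p := le_trans (abs_nonneg (gm 0 p)) (le_ciSup hbdd 0)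
    refine ⟨?_, hN0⟩
    have hsel : ⟪g (u p) p, c p⟫ = |gm (k p) p| := by
      show ⟪g (u p) p, σ p • e (k p)⟫ = |gm (k p) p|
      rw [real_inner_smul_right, ← hp (k p)]
      by_cases h : 0 ≤ gm (k p) p
      · rw [hσ]; simp only [h, if_true, one_mul]
        rw [abs_of_nonneg (by rw [← hp (k p)] at h; exact h)]
      · rw [hσ]; simp only [h, if_false, neg_one_mul]
        push_neg at h
        rw [abs_of_neg (by rw [← hp (k p)] at h; exact h)]
    have hgradpt : ⟪g (u p) p, w p⟫ ≤ J (u p + w p) p - J (u p) p :=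
      ams_plain hα hgrad hconv p (u p) (w p)
    have hwinner : ⟪g (u p) p, w p⟫ = |θ p| * |gm (k p) p| := by
      show ⟪g (u p) p, |θ p| • c p⟫ = |θ p| * |gm (k p) p|
      rw [real_inner_smul_right, hsel]
    have h1 : |θ p| * N p ≤ 2 * (|θ p| * |gm (k p) p|) := by
      have := hkspec p
      nlinarith [abs_nonneg (θ p)]
    calc |θ p| * N p ≤ 2 * (|θ p| * |gm (k p) p|) := h1
      _ = 2 * ⟪g (u p) p, w p⟫ := by rw [hwinner]
      _ ≤ D p := by show _ ≤ 2 * (J (u p + w p) p - J (u p) p); linarith [hgradpt]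
  -- integrability of |θ| * N
  have hNint : Integrable (fun p => |θ p| * N p) μ := by
    apply Integrable.mono' hDint
    · exact ((hθ.aestronglyMeasurable.norm.congr
        (by filter_upwards with p using (Real.norm_eq_abs _))).mul
        hNmeas.aestronglyMeasurable)
    · filter_upwards [hae1] with p hp
      rw [Real.norm_eq_abs, abs_mul, abs_abs, abs_of_nonneg hp.2]
      exact hp.1
  -- contradiction
  obtain ⟨n, hn⟩ := exists_nat_gt (∫ p, D p ∂μ)
  have hint_n : Integrable (fun p => θ p * ⟪g (u p) p, e n⟫) μ := by
    have h1 : MemLp (fun p => θ p • e n) 2 μ := by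
      apply MemLp.of_le hθ (hθ.aestronglyMeasurable.smul_const (e n))
      filter_upwards with p
      rw [norm_smul]
      calc ‖θ p‖ * ‖e n‖ ≤ ‖θ p‖ * 1 := by
            apply mul_le_mul_of_nonneg_left (he n) (norm_nonneg _)
        _ = ‖θ p‖ := mul_one _
    have := ams_inner_int hα hgrad hconv hint hu h1
    apply this.congr
    filter_upwards with p
    rw [real_inner_smul_right]
  have hchain : (n : ℝ) < ∫ p, D p ∂μ := by
    calc (n : ℝ) < |∫ p, θ p * ⟪g (u p) p, e n⟫ ∂μ| := hbig n
      _ ≤ ∫ p, |θ p| * |⟪g (u p) p, e n⟫| ∂μ := by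
          simpa [Real.norm_eq_abs, abs_mul] using norm_integral_le_integral_norm
            (fun p => θ p * ⟪g (u p) p, e n⟫) (μ := μ)
      _ ≤ ∫ p, |θ p| * N p ∂μ := by
          apply integral_mono_ae (hint_n.abs.congr (by
            filter_upwards with p using (abs_mul _ _))) hNint
          filter_upwards [hgmae, hae1] with p hp _
          apply mul_le_mul_of_nonneg_left _ (abs_nonneg (θ p))
          have hbdd : BddAbove (Set.range fun m => |gm m p|) := by
            refine ⟨‖g (u p) p‖, ?_⟩
            rintro x ⟨m, rfl⟩
            show |gm m p| ≤ ‖g (u p) p‖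
            rw [← hp m]
            calc |⟪g (u p) p, e m⟫| ≤ ‖g (u p) p‖ * ‖e m‖ := abs_real_inner_le_norm _ _
              _ ≤ ‖g (u p) p‖ * 1 := by
                  apply mul_le_mul_of_nonneg_left (he m) (norm_nonneg _)
              _ = _ := mul_one _
          rw [hp n]
          exact le_ciSup hbdd n
      _ ≤ ∫ p, D p ∂μ := by
          apply integral_mono_ae hNint hDint
          filter_upwards [hae1] with p hp using hp.1
  linarith


variable {U : Type*} [NormedAddCommGroup U] [InnerProductSpace ℝ U] [CompleteSpace U]
variable {P : Type*} [MeasurableSpace P] {μ : Measure P} [IsFiniteMeasure μ]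

lemma ams_memLp_sum {r : ℕ} (lam : Fin r → P → ℝ) (hlam : ∀ i, MemLp (lam i) 2 μ)
    (u : Fin r → U) : MemLp (fun p => ∑ j, lam j p • u j) 2 μ := by
  have h : ∀ j : Fin r, MemLp (fun p => lam j p • u j) 2 μ := by
    intro j
    exact MemLp.smul (p := 2) (q := (⊤ : ENNReal)) (r := 2)
      (memLp_top_const (μ := μ) (u j)) (hlam j)
  simpa using memLp_finset_sum Finset.univ (fun j (_ : j ∈ Finset.univ) => h j)

lemma ams_gram {r : ℕ} (lam : Fin r → P → ℝ) (hlam : ∀ i, MemLp (lam i) 2 μ)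
    (hli : LinearIndependent ℝ fun i => MemLp.toLp (lam i) (hlam i)) :
    ∃ C : ℝ, 0 ≤ C ∧ ∀ (u : Fin r → U) (i : Fin r),
      ‖u i‖ ^ 2 ≤ C * ∫ p, ‖∑ j, lam j p • u j‖ ^ 2 ∂μ := by
  classical
  set Λ : Fin r → Lp ℝ 2 μ := fun i => MemLp.toLp (lam i) (hlam i) with hΛ
  set Γ : Fin r → Fin r → ℝ := fun j k => ⟪Λ j, Λ k⟫ with hΓdef
  have hΓint : ∀ j k, Integrable (fun p => lam j p * lam k p) μ := by
    intro j k
    have h := L2.integrable_inner (𝕜 := ℝ) (Λ j) (Λ k)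
    apply h.congr
    filter_upwards [MemLp.coeFn_toLp (hlam j), MemLp.coeFn_toLp (hlam k)] with p h1 h2
    rw [Real.inner_apply]
    show (Λ j : P → ℝ) p * (Λ k : P → ℝ) p = lam j p * lam k p
    rw [h1, h2]
  have hΓeq : ∀ j k, Γ j k = ∫ p, lam j p * lam k p ∂μ := by
    intro j k
    rw [hΓdef]
    simp only
    rw [L2.inner_def]
    apply integral_congr_ae
    filter_upwards [MemLp.coeFn_toLp (hlam j), MemLp.coeFn_toLp (hlam k)] with p h1 h2
    rw [Real.inner_apply]
    show (Λ j : P → ℝ) p * (Λ k : P → ℝ) p = lam j p * lam k p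
    rw [h1, h2]
  -- injectivity of x ↦ (k ↦ ∑ j, Γ j k * x j)
  have hA : ∀ x : Fin r → ℝ, (∀ k, ∑ j, Γ j k * x j = 0) → x = 0 := by
    intro x hx
    have expand : ⟪∑ j, x j • Λ j, ∑ k, x k • Λ k⟫ =
        ∑ k, (∑ j, Γ j k * x j) * x k := by
      rw [sum_inner]
      simp only [inner_sum, real_inner_smul_left, real_inner_smul_right]
      rw [Finset.sum_comm]
      apply Finset.sum_congr rfl
      intro k _
      rw [Finset.sum_mul]
      apply Finset.sum_congr rfl
      intro j _
      show x k * (x j * Γ j k) = Γ j k * x j * x k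
      ring
    have hz : (∑ j, x j • Λ j) = 0 := by
      rw [← inner_self_eq_zero (𝕜 := ℝ)]
      rw [expand]
      apply Finset.sum_eq_zero
      intro k _
      rw [hx k, zero_mul]
    have := Fintype.linearIndependent_iff.1 hli x hz
    funext i; exact this i
  -- linear map and its inverse images of basis vectors
  set T : (Fin r → ℝ) →ₗ[ℝ] (Fin r → ℝ) := (Matrix.of fun k j => Γ j k).mulVecLin with hT
  have hTapp : ∀ x k, T x k = ∑ j, Γ j k * x j := by
    intro x k
    simp [hT, Matrix.mulVecLin, Matrix.mulVec, dotProduct]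
  have hTinj : Function.Injective T := by
    intro a b hab
    have h0 : T (a - b) = 0 := by rw [map_sub, hab, sub_self]
    have := hA (a - b) (by
      intro k
      rw [← hTapp (a - b) k, h0]
      rfl)
    exact sub_eq_zero.1 this
  have hTsurj : Function.Surjective T := (LinearMap.injective_iff_surjective).1 hTinj
  choose y hy using fun i : Fin r => hTsurj (Pi.single i 1)
  -- constants
  set A : Fin r → Lp ℝ 2 μ := fun j => MemLp.toLp (fun p => |lam j p|) ((hlam j).norm) with hAdef
  set K : Fin r → ℝ := fun i => ∑ j, |y i j| * ‖A j‖ with hK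
  refine ⟨∑ i, K i ^ 2, Finset.sum_nonneg (fun i _ => sq_nonneg _), ?_⟩
  intro u i
  have hFu : MemLp (fun p => ∑ j, lam j p • u j) 2 μ := ams_memLp_sum lam hlam u
  set B : Lp ℝ 2 μ := MemLp.toLp (fun p => ‖∑ j, lam j p • u j‖) hFu.norm with hBdef
  set Q : ℝ := ∫ p, ‖∑ j, lam j p • u j‖ ^ 2 ∂μ with hQ
  have hQnn : 0 ≤ Q := integral_nonneg (fun p => sq_nonneg _)
  have hBQ : ‖B‖ ^ 2 = Q := by
    rw [← real_inner_self_eq_norm_sq, L2.inner_def, hQ]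
    apply integral_congr_ae
    filter_upwards [MemLp.coeFn_toLp hFu.norm] with p h1
    show (B : P → ℝ) p * (B : P → ℝ) p = _
    rw [h1]
    exact (sq _).symm
  -- the moment vectors
  set b : Fin r → U := fun j => ∫ p, lam j p • (∑ k, lam k p • u k) ∂μ with hb
  have hbrep : ∀ j, b j = ∑ k, Γ j k • u k := by
    intro j
    rw [hb]
    simp only
    have e1 : ∀ p, lam j p • (∑ k, lam k p • u k) = ∑ k, (lam j p * lam k p) • u k := by
      intro p
      rw [Finset.smul_sum]
      apply Finset.sum_congr rfl
      intro k _
      rw [smul_smul]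
    rw [integral_congr_ae (Filter.Eventually.of_forall e1)]
    rw [integral_finset_sum _ (fun k _ => (hΓint j k).smul_const (u k))]
    apply Finset.sum_congr rfl
    intro k _
    rw [integral_smul_const, hΓeq j k]
  have hble : ∀ j, ‖b j‖ ≤ ‖A j‖ * ‖B‖ := by
    intro j
    have h1 : ‖b j‖ ≤ ∫ p, ‖lam j p • (∑ k, lam k p • u k)‖ ∂μ :=
      norm_integral_le_integral_norm _
    have h2 : (∫ p, ‖lam j p • (∑ k, lam k p • u k)‖ ∂μ) = ⟪A j, B⟫ := by
      rw [L2.inner_def]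
      apply integral_congr_ae
      filter_upwards [MemLp.coeFn_toLp (f := fun p => |lam j p|) ((hlam j).norm),
        MemLp.coeFn_toLp hFu.norm] with p hp1 hp2
      rw [Real.inner_apply]
      show ‖lam j p • (∑ k, lam k p • u k)‖ = (A j : P → ℝ) p * (B : P → ℝ) p
      rw [hp1, hp2, norm_smul, Real.norm_eq_abs]
    calc ‖b j‖ ≤ ∫ p, ‖lam j p • (∑ k, lam k p • u k)‖ ∂μ := h1
      _ = ⟪A j, B⟫ := h2
      _ ≤ ‖A j‖ * ‖B‖ := real_inner_le_norm _ _
  have hurep : u i = ∑ j, y i j • b j := by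
    have e0 : ∑ j, y i j • b j = ∑ j, y i j • ∑ k, Γ j k • u k := by
      apply Finset.sum_congr rfl
      intro j _
      rw [hbrep j]
    have e1 : ∑ j, y i j • b j = ∑ k, (∑ j, Γ j k * y i j) • u k := by
      rw [e0]
      simp only [Finset.smul_sum, smul_smul]
      rw [Finset.sum_comm]
      apply Finset.sum_congr rfl
      intro k _
      rw [← Finset.sum_smul]
      congr 1
      apply Finset.sum_congr rfl
      intro j _
      ring
    have e2 : ∀ k, (∑ j, Γ j k * y i j) = Pi.single (M := fun _ : Fin r => ℝ) i 1 k := by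
      intro k
      rw [← hTapp (y i) k, hy i]
    rw [e1]
    have e3 : ∑ k, (∑ j, Γ j k * y i j) • u k = ∑ k, Pi.single (M := fun _ : Fin r => ℝ) i 1 k • u k := by
      apply Finset.sum_congr rfl
      intro k _
      rw [e2 k]
    rw [e3]
    rw [Finset.sum_eq_single i]
    · rw [Pi.single_eq_same, one_smul]
    · intro k _ hk
      rw [Pi.single_eq_of_ne hk, zero_smul]
    · intro h
      exact absurd (Finset.mem_univ i) h
  have hnorm : ‖u i‖ ≤ K i * ‖B‖ := by
    rw [hurep]
    calc ‖∑ j, y i j • b j‖ ≤ ∑ j, ‖y i j • b j‖ := norm_sum_le _ _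
      _ ≤ ∑ j, |y i j| * (‖A j‖ * ‖B‖) := by
          apply Finset.sum_le_sum
          intro j _
          rw [norm_smul, Real.norm_eq_abs]
          exact mul_le_mul_of_nonneg_left (hble j) (abs_nonneg _)
      _ = K i * ‖B‖ := by
          rw [hK]
          simp only
          rw [Finset.sum_mul]
          apply Finset.sum_congr rfl
          intro j _
          ring
  have hKnn : 0 ≤ K i := by
    apply Finset.sum_nonneg
    intro j _
    positivity
  calc ‖u i‖ ^ 2 ≤ (K i * ‖B‖) ^ 2 := by
        apply pow_le_pow_left₀ (norm_nonneg _) hnorm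
    _ = K i ^ 2 * Q := by rw [mul_pow, hBQ]
    _ ≤ (∑ i', K i' ^ 2) * Q := by
        apply mul_le_mul_of_nonneg_right _ hQnn
        exact Finset.single_le_sum (fun i' _ => sq_nonneg (K i')) (Finset.mem_univ i)

end MeasAux
end AMSAux

set_option maxHeartbeats 1000000 in
/-- Alternating minimization step on the spatial vectors: with `(λᵢ)` linearly
independent in `L²(μ;ℝ)`, the map
`(v₁,…,v_r) ↦ ∫ J(∑ᵢ λᵢ(p) • vᵢ; p) dμ` has a unique minimizer `v*` over
`𝒰ʳ`, characterized by the stationarity equations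
`∫ ⟪∇J(F_r(λ,v*)(p);p), F_r(λ,δv)(p)⟫ dμ = 0` for all `δv ∈ 𝒰ʳ`. -/
theorem alternating_minimization_spatial_step
    {U : Type*} [NormedAddCommGroup U] [InnerProductSpace ℝ U] [CompleteSpace U]
    {P : Type*} [MeasurableSpace P] (μ : Measure P) [IsFiniteMeasure μ]
    (α : ℝ) (hα : 0 < α) (J : U → P → ℝ) (g : U → P → U)
    (hgrad : ∀ (p : P) (v : U), HasGradientAt (fun x => J x p) (g v p) v)
    (hconv : ∀ (p : P) (v w : U), ∀ t ∈ Set.Icc (0 : ℝ) 1,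
      J (t • v + (1 - t) • w) p ≤
        t * J v p + (1 - t) * J w p - α / 2 * (t * (1 - t)) * ‖v - w‖ ^ 2)
    (hint : ∀ u : P → U, MemLp u 2 μ → Integrable (fun p => J (u p) p) μ)
    (r : ℕ) (lam : Fin r → P → ℝ) (hlam : ∀ i, MemLp (lam i) 2 μ)
    (hli : LinearIndependent ℝ fun i => MemLp.toLp (lam i) (hlam i)) :
    (∃! vstar : Fin r → U, ∀ v : Fin r → U,
        (∫ p, J (∑ i, lam i p • vstar i) p ∂μ) ≤ ∫ p, J (∑ i, lam i p • v i) p ∂μ) ∧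
    (∀ vstar : Fin r → U,
      (∀ v : Fin r → U,
          (∫ p, J (∑ i, lam i p • vstar i) p ∂μ) ≤ ∫ p, J (∑ i, lam i p • v i) p ∂μ) ↔
        (∀ δv : Fin r → U,
          (∫ p, ⟪g (∑ i, lam i p • vstar i) p, ∑ i, lam i p • δv i⟫ ∂μ) = 0)) := by
  classical
  set F : (Fin r → U) → P → U := fun v p => ∑ i, lam i p • v i with hFdef
  set G : (Fin r → U) → ℝ := fun v => ∫ p, J (F v p) p ∂μ with hGdef
  have hFmem : ∀ v, MemLp (F v) 2 μ := fun v => ams_memLp_sum lam hlam v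
  have hJint : ∀ v, Integrable (fun p => J (F v p) p) μ := fun v => hint _ (hFmem v)
  -- pointwise linearity of F
  have hFsub : ∀ (v w : Fin r → U) (p : P), F v p - F w p = F (v - w) p := by
    intro v w p
    show (∑ i, lam i p • v i) - (∑ i, lam i p • w i) = ∑ i, lam i p • (v i - w i)
    rw [← Finset.sum_sub_distrib]
    exact Finset.sum_congr rfl fun i _ => (smul_sub _ _ _).symm
  have hFcomb : ∀ (v δ : Fin r → U) (t : ℝ) (p : P),
      F v p + t • F δ p = F (v + t • δ) p := by
    intro v δ t p
    show (∑ i, lam i p • v i) + t • (∑ i, lam i p • δ i) = ∑ i, lam i p • (v i + t • δ i)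
    rw [Finset.smul_sum, ← Finset.sum_add_distrib]
    refine Finset.sum_congr rfl fun i _ => ?_
    rw [smul_add, smul_comm]
  have hF0 : ∀ p, F (0 : Fin r → U) p = 0 := by
    intro p
    show (∑ i, lam i p • (0 : U)) = 0
    simp
  -- integrability of the stationarity integrand
  have hBint : ∀ v w : Fin r → U, Integrable (fun p => ⟪g (F v p) p, F w p⟫) μ :=
    fun v w => ams_inner_int hα hgrad hconv hint (hFmem v) (hFmem w)
  have hBint' : ∀ (v : Fin r → U) {w : P → U}, MemLp w 2 μ →
      Integrable (fun p => ⟪g (F v p) p, w p⟫) μ :=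
    fun v w hw => ams_inner_int hα hgrad hconv hint (hFmem v) hw
  have hQint : ∀ v : Fin r → U, Integrable (fun p => ‖F v p‖ ^ 2) μ :=
    fun v => (hFmem v).norm.integrable_sq
  -- integrated strong-convexity gradient inequality
  have hGineq : ∀ v w : Fin r → U,
      G v + (∫ p, ⟪g (F v p) p, F w p - F v p⟫ ∂μ)
        + α / 2 * ∫ p, ‖F w p - F v p‖ ^ 2 ∂μ ≤ G w := by
    intro v w
    have hwv : MemLp (fun p => F w p - F v p) 2 μ := (hFmem w).sub (hFmem v)
    have hInner := hBint' v hwv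
    have hQ : Integrable (fun p => ‖F w p - F v p‖ ^ 2) μ := by
      apply (hQint (w - v)).congr
      filter_upwards with p
      rw [← hFsub w v p]
    have hpt : ∀ p, J (F v p) p + ⟪g (F v p) p, F w p - F v p⟫
        + α / 2 * ‖F w p - F v p‖ ^ 2 ≤ J (F w p) p := by
      intro p
      have h := ams_grad_ineq' hα hgrad hconv p (F v p) (F w p - F v p)
      have e : F v p + (F w p - F v p) = F w p := by abel
      rw [e] at h
      linarith
    have hIa : Integrable (fun p => J (F v p) p + ⟪g (F v p) p, F w p - F v p⟫) μ :=
      (hJint v).add hInner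
    have hIb : Integrable (fun p => α / 2 * ‖F w p - F v p‖ ^ 2) μ := hQ.const_mul _
    have h2 : (∫ p, (J (F v p) p + ⟪g (F v p) p, F w p - F v p⟫
        + α / 2 * ‖F w p - F v p‖ ^ 2) ∂μ) ≤ ∫ p, J (F w p) p ∂μ :=
      integral_mono_ae (hIa.add hIb) (hJint w) (Eventually.of_forall hpt)
    rw [integral_add hIa hIb, integral_add (hJint v) hInner, integral_const_mul] at h2
    exact h2
  -- splitting of the linear functional
  have hsplit : ∀ v w : Fin r → U,
      (∫ p, ⟪g (F v p) p, F w p⟫ ∂μ) = ∑ i, ∫ p, lam i p * ⟪g (F v p) p, w i⟫ ∂μ := by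
    intro v w
    have hpt : ∀ p, ⟪g (F v p) p, F w p⟫ = ∑ i, lam i p * ⟪g (F v p) p, w i⟫ := by
      intro p
      show ⟪g (F v p) p, ∑ i, lam i p • w i⟫ = _
      rw [inner_sum]
      exact Finset.sum_congr rfl fun i _ => real_inner_smul_right _ _ _
    rw [integral_congr_ae (Eventually.of_forall hpt)]
    rw [integral_finset_sum]
    intro i _
    have hm : MemLp (fun p => lam i p • w i) 2 μ :=
      MemLp.smul (p := 2) (q := (⊤ : ENNReal)) (r := 2)
        (memLp_top_const (w i)) (hlam i)
    apply (hBint' v hm).congr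
    filter_upwards with p
    rw [real_inner_smul_right]
  -- midpoint strong convexity
  have hmid : ∀ v w : Fin r → U,
      G (fun i => (2⁻¹ : ℝ) • (v i + w i)) ≤
        2⁻¹ * G v + 2⁻¹ * G w - α / 8 * ∫ p, ‖F v p - F w p‖ ^ 2 ∂μ := by
    intro v w
    set m : Fin r → U := fun i => (2⁻¹ : ℝ) • (v i + w i) with hm
    have hFm : ∀ p, F m p = (2⁻¹ : ℝ) • F v p + (1 - 2⁻¹ : ℝ) • F w p := by
      intro p
      have e1 : (1 - 2⁻¹ : ℝ) = 2⁻¹ := by norm_num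
      rw [e1]
      show (∑ i, lam i p • ((2⁻¹ : ℝ) • (v i + w i)))
        = (2⁻¹ : ℝ) • (∑ i, lam i p • v i) + (2⁻¹ : ℝ) • (∑ i, lam i p • w i)
      rw [Finset.smul_sum, Finset.smul_sum, ← Finset.sum_add_distrib]
      refine Finset.sum_congr rfl fun i _ => ?_
      rw [smul_comm, smul_add, smul_add]
    have hQvw : Integrable (fun p => ‖F v p - F w p‖ ^ 2) μ := by
      apply (hQint (v - w)).congr
      filter_upwards with p
      rw [← hFsub v w p]
    have hpt : ∀ p, J (F m p) p ≤
        2⁻¹ * J (F v p) p + 2⁻¹ * J (F w p) p - α / 8 * ‖F v p - F w p‖ ^ 2 := by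
      intro p
      have h := hconv p (F v p) (F w p) 2⁻¹ ⟨by norm_num, by norm_num⟩
      rw [← hFm p] at h
      have e1 : (1 - 2⁻¹ : ℝ) = 2⁻¹ := by norm_num
      rw [e1] at h
      have e2 : α / 2 * (2⁻¹ * 2⁻¹) * ‖F v p - F w p‖ ^ 2
          = α / 8 * ‖F v p - F w p‖ ^ 2 := by ring
      rw [e2] at h
      linarith
    have hIa : Integrable (fun p => 2⁻¹ * J (F v p) p + 2⁻¹ * J (F w p) p) μ :=
      ((hJint v).const_mul _).add ((hJint w).const_mul _)
    have hIb : Integrable (fun p => α / 8 * ‖F v p - F w p‖ ^ 2) μ := hQvw.const_mul _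
    have h2 : (∫ p, J (F m p) p ∂μ) ≤ ∫ p, (2⁻¹ * J (F v p) p + 2⁻¹ * J (F w p) p
        - α / 8 * ‖F v p - F w p‖ ^ 2) ∂μ :=
      integral_mono_ae (hJint m) (hIa.sub hIb) (Eventually.of_forall hpt)
    rw [integral_sub hIa hIb, integral_add ((hJint v).const_mul _) ((hJint w).const_mul _),
      integral_const_mul, integral_const_mul, integral_const_mul] at h2
    exact h2
  -- bounded linear functionals
  have hLbd : ∀ (v : Fin r → U) (i : Fin r), ∃ C : ℝ,
      ∀ c : U, |∫ p, lam i p * ⟪g (F v p) p, c⟫ ∂μ| ≤ C * ‖c‖ :=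
    fun v i => ams_functional_bound hα hgrad hconv hint (hFmem v) (hlam i)
  choose Cb hCb using hLbd
  obtain ⟨CQ, hCQ0, hCQ⟩ := ams_gram (U := U) lam hlam hli
  have hCQ' : ∀ (u : Fin r → U) (i : Fin r), ‖u i‖ ^ 2 ≤ CQ * ∫ p, ‖F u p‖ ^ 2 ∂μ := by
    intro u i
    simpa [hFdef] using hCQ u i
  have hQnn : ∀ v : Fin r → U, 0 ≤ ∫ p, ‖F v p‖ ^ 2 ∂μ :=
    fun v => integral_nonneg fun p => sq_nonneg _
  -- characterization: stationarity implies minimality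
  have charB : ∀ vstar : Fin r → U,
      (∀ δv : Fin r → U, (∫ p, ⟪g (F vstar p) p, F δv p⟫ ∂μ) = 0) →
      ∀ v : Fin r → U, G vstar ≤ G v := by
    intro vstar hst v
    have h1 := hGineq vstar v
    have hpt : ∀ p, ⟪g (F vstar p) p, F v p - F vstar p⟫
        = ⟪g (F vstar p) p, F (v - vstar) p⟫ := fun p => by rw [hFsub v vstar p]
    have heq : (∫ p, ⟪g (F vstar p) p, F v p - F vstar p⟫ ∂μ)
        = ∫ p, ⟪g (F vstar p) p, F (v - vstar) p⟫ ∂μ :=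
      integral_congr_ae (Eventually.of_forall hpt)
    rw [heq, hst (v - vstar)] at h1
    have h3 : 0 ≤ α / 2 * ∫ p, ‖F v p - F vstar p‖ ^ 2 ∂μ :=
      mul_nonneg (by linarith) (integral_nonneg fun p => sq_nonneg _)
    linarith
  -- characterization: minimality implies stationarity
  have charA : ∀ vstar : Fin r → U, (∀ v : Fin r → U, G vstar ≤ G v) →
      ∀ δv : Fin r → U, (∫ p, ⟪g (F vstar p) p, F δv p⟫ ∂μ) = 0 := by
    intro vstar hmin δv
    have key : ∀ δ : Fin r → U, 0 ≤ ∫ p, ⟪g (F vstar p) p, F δ p⟫ ∂μ := by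
      intro δ
      set φ : ℕ → P → ℝ := fun n p =>
        ((n : ℝ) + 1) * (J (F vstar p + ((n : ℝ) + 1)⁻¹ • F δ p) p - J (F vstar p) p) with hφ
      have hmemn : ∀ n : ℕ, MemLp (fun p => F vstar p + ((n : ℝ) + 1)⁻¹ • F δ p) 2 μ :=
        fun n => (hFmem vstar).add ((hFmem δ).const_smul _)
      have hφmeas : ∀ n, AEStronglyMeasurable (φ n) μ :=
        fun n => ((hint _ (hmemn n)).sub (hJint vstar)).aestronglyMeasurable.const_mul _
      set bound : P → ℝ := fun p => |J (F vstar p + F δ p) p - J (F vstar p) p|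
        + |J (F vstar p) p - J (F vstar p - F δ p) p| with hbd
      have hbint : Integrable bound μ :=
        (((hint _ ((hFmem vstar).add (hFmem δ))).sub (hJint vstar)).abs).add
          (((hJint vstar).sub (hint _ ((hFmem vstar).sub (hFmem δ)))).abs)
      have hboundn : ∀ n, ∀ᵐ p ∂μ, ‖φ n p‖ ≤ bound p := by
        intro n
        filter_upwards with p
        obtain ⟨hlow, hup⟩ := ams_quot_bounds hα hgrad hconv p (F vstar p) (F δ p) n
        have hl2 := ams_lower hα hgrad hconv p (F vstar p) (F δ p)
        rw [Real.norm_eq_abs]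
        show |φ n p| ≤ |J (F vstar p + F δ p) p - J (F vstar p) p|
          + |J (F vstar p) p - J (F vstar p - F δ p) p|
        have e1 := le_abs_self (J (F vstar p + F δ p) p - J (F vstar p) p)
        have e2 := neg_abs_le (J (F vstar p) p - J (F vstar p - F δ p) p)
        have hφp : φ n p = ((n : ℝ) + 1)
            * (J (F vstar p + ((n : ℝ) + 1)⁻¹ • F δ p) p - J (F vstar p) p) := rfl
        refine abs_le.2 ⟨?_, ?_⟩
        · linarith [abs_nonneg (J (F vstar p + F δ p) p - J (F vstar p) p), hφp]
        · linarith [abs_nonneg (J (F vstar p) p - J (F vstar p - F δ p) p), hφp]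
      have htend : ∀ᵐ p ∂μ, Tendsto (fun n => φ n p) atTop
          (𝓝 ⟪g (F vstar p) p, F δ p⟫) :=
        Eventually.of_forall fun p => ams_tendsto_quot (hgrad p (F vstar p)) (F δ p)
      have hlim := tendsto_integral_of_dominated_convergence bound hφmeas hbint hboundn htend
      apply ge_of_tendsto hlim
      filter_upwards with n
      have hIone : Integrable (fun p => J (F vstar p + ((n : ℝ) + 1)⁻¹ • F δ p) p) μ :=
        hint _ (hmemn n)
      have hrw : (∫ p, φ n p ∂μ)
          = ((n : ℝ) + 1) * ((G (vstar + ((n : ℝ) + 1)⁻¹ • δ)) - G vstar) := by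
        have e0 : (∫ p, φ n p ∂μ) = ∫ p, ((n : ℝ) + 1)
            * (J (F vstar p + ((n : ℝ) + 1)⁻¹ • F δ p) p - J (F vstar p) p) ∂μ := rfl
        rw [e0, integral_const_mul]
        congr 1
        rw [integral_sub hIone (hJint vstar)]
        congr 1
        have hpt : ∀ p, J (F vstar p + ((n : ℝ) + 1)⁻¹ • F δ p) p
            = J (F (vstar + ((n : ℝ) + 1)⁻¹ • δ) p) p := fun p => by
          rw [hFcomb vstar δ _ p]
        exact integral_congr_ae (Eventually.of_forall hpt)
      rw [hrw]
      exact mul_nonneg (by positivity) (sub_nonneg.2 (hmin _))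
    have h1 := key δv
    have h2 := key (-δv)
    have hneg : (∫ p, ⟪g (F vstar p) p, F (-δv) p⟫ ∂μ)
        = - ∫ p, ⟪g (F vstar p) p, F δv p⟫ ∂μ := by
      rw [← integral_neg]
      apply integral_congr_ae
      filter_upwards with p
      have hzz : F (-δv) p = - F δv p := by
        have h3 := hFsub 0 δv p
        rw [hF0 p, zero_sub, zero_sub] at h3
        exact h3.symm
      rw [hzz, inner_neg_right]
    rw [hneg] at h2
    linarith
  -- uniqueness
  have huniq : ∀ v w : Fin r → U, (∀ z, G v ≤ G z) → (∀ z, G w ≤ G z) → v = w := by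
    intro v w hv hw
    have h := hmid v w
    have h1 := hv (fun i => (2⁻¹ : ℝ) • (v i + w i))
    have h2 := hw (fun i => (2⁻¹ : ℝ) • (v i + w i))
    have hQnn2 : 0 ≤ ∫ p, ‖F v p - F w p‖ ^ 2 ∂μ := integral_nonneg fun p => sq_nonneg _
    have hQ0 : (∫ p, ‖F v p - F w p‖ ^ 2 ∂μ) = 0 := by
      nlinarith [h, h1, h2, hα, hQnn2]
    funext i
    have h3 := hCQ' (v - w) i
    have hpt : ∀ p, ‖F (v - w) p‖ ^ 2 = ‖F v p - F w p‖ ^ 2 := fun p => by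
      rw [← hFsub v w p]
    have heq : (∫ p, ‖F (v - w) p‖ ^ 2 ∂μ) = ∫ p, ‖F v p - F w p‖ ^ 2 ∂μ :=
      integral_congr_ae (Eventually.of_forall hpt)
    rw [heq, hQ0, mul_zero] at h3
    have h4 : ‖v i - w i‖ = 0 := by
      have h5 : ‖(v - w) i‖ ^ 2 ≤ 0 := h3
      have h6 : (v - w) i = v i - w i := rfl
      rw [h6] at h5
      nlinarith [norm_nonneg (v i - w i)]
    exact sub_eq_zero.1 (norm_eq_zero.1 h4)
  -- existence
  have hexist : ∃ vstar : Fin r → U, ∀ v : Fin r → U, G vstar ≤ G v := by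
    clear_value F G
    set S : ℝ := ∑ i, |Cb 0 i| with hS
    have hS0 : 0 ≤ S := Finset.sum_nonneg fun i _ => abs_nonneg _
    have hlb : ∀ w : Fin r → U, G 0 - S ^ 2 * CQ / (2 * α) ≤ G w := by
      intro w
      have h1 := hGineq 0 w
      have hw0 : (w - 0 : Fin r → U) = w := sub_zero w
      have hpt1 : ∀ p, ⟪g (F 0 p) p, F w p - F 0 p⟫ = ⟪g (F 0 p) p, F w p⟫ := by
        intro p
        rw [hFsub w 0 p, hw0]
      have heq1 : (∫ p, ⟪g (F 0 p) p, F w p - F 0 p⟫ ∂μ)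
          = ∫ p, ⟪g (F 0 p) p, F w p⟫ ∂μ :=
        integral_congr_ae (Eventually.of_forall hpt1)
      have hpt2 : ∀ p, ‖F w p - F 0 p‖ ^ 2 = ‖F w p‖ ^ 2 := by
        intro p
        rw [hFsub w 0 p, hw0]
      have heq2 : (∫ p, ‖F w p - F 0 p‖ ^ 2 ∂μ) = ∫ p, ‖F w p‖ ^ 2 ∂μ :=
        integral_congr_ae (Eventually.of_forall hpt2)
      rw [heq1, heq2, hsplit 0 w] at h1
      set Qw : ℝ := ∫ p, ‖F w p‖ ^ 2 ∂μ with hQw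
      have hQwnn : 0 ≤ Qw := hQnn w
      have hwi : ∀ i, ‖w i‖ ≤ Real.sqrt (CQ * Qw) := by
        intro i
        have h3 := hCQ' w i
        calc ‖w i‖ = Real.sqrt (‖w i‖ ^ 2) := (Real.sqrt_sq (norm_nonneg _)).symm
          _ ≤ Real.sqrt (CQ * Qw) := Real.sqrt_le_sqrt h3
      have hsum : |∑ i, ∫ p, lam i p * ⟪g (F 0 p) p, w i⟫ ∂μ|
          ≤ S * Real.sqrt (CQ * Qw) := by
        calc |∑ i, ∫ p, lam i p * ⟪g (F 0 p) p, w i⟫ ∂μ|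
            ≤ ∑ i, |∫ p, lam i p * ⟪g (F 0 p) p, w i⟫ ∂μ| :=
              Finset.abs_sum_le_sum_abs _ _
          _ ≤ ∑ i, |Cb 0 i| * Real.sqrt (CQ * Qw) := by
              apply Finset.sum_le_sum
              intro i _
              calc |∫ p, lam i p * ⟪g (F 0 p) p, w i⟫ ∂μ| ≤ Cb 0 i * ‖w i‖ :=
                    hCb 0 i (w i)
                _ ≤ |Cb 0 i| * ‖w i‖ :=
                    mul_le_mul_of_nonneg_right (le_abs_self _) (norm_nonneg _)
                _ ≤ |Cb 0 i| * Real.sqrt (CQ * Qw) :=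
                    mul_le_mul_of_nonneg_left (hwi i) (abs_nonneg _)
          _ = S * Real.sqrt (CQ * Qw) := (Finset.sum_mul _ _ _).symm
      have hkey : S * Real.sqrt (CQ * Qw) ≤ S ^ 2 * CQ / (2 * α) + α / 2 * Qw := by
        set x : ℝ := Real.sqrt (CQ * Qw) with hx
        have hx0 : 0 ≤ x := Real.sqrt_nonneg _
        have hx2 : x ^ 2 = CQ * Qw := Real.sq_sqrt (mul_nonneg hCQ0 hQwnn)
        rcases eq_or_lt_of_le hCQ0 with hCQz | hCQp
        · have hxz : x = 0 := by
            rw [hx, ← hCQz, zero_mul, Real.sqrt_zero]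
          rw [hxz, mul_zero]
          apply add_nonneg
          · apply div_nonneg (mul_nonneg (sq_nonneg S) hCQ0) (by linarith)
          · exact mul_nonneg (by linarith) hQwnn
        · have hQx : Qw = x ^ 2 / CQ := by
            field_simp
            linarith [hx2]
          rw [hQx]
          have hid : S ^ 2 * CQ / (2 * α) + α / 2 * (x ^ 2 / CQ) - S * x
              = (α * x - S * CQ) ^ 2 / (2 * α * CQ) := by
            field_simp
            ring
          have hnn : 0 ≤ (α * x - S * CQ) ^ 2 / (2 * α * CQ) :=
            div_nonneg (sq_nonneg _) (by positivity)
          linarith [hid ▸ hnn]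
      have hsge : -(S * Real.sqrt (CQ * Qw)) ≤ ∑ i, ∫ p, lam i p * ⟪g (F 0 p) p, w i⟫ ∂μ :=
        neg_le_of_abs_le hsum
      linarith
    have hbdd : BddBelow (Set.range G) := by
      refine ⟨G 0 - S ^ 2 * CQ / (2 * α), ?_⟩
      rintro x ⟨w, rfl⟩
      exact hlb w
    have hne : (Set.range G).Nonempty := ⟨G 0, 0, rfl⟩
    have hdle : ∀ v, sInf (Set.range G) ≤ G v := fun v => csInf_le hbdd ⟨v, rfl⟩
    set d : ℝ := sInf (Set.range G) with hd
    have hseq : ∀ n : ℕ, ∃ v, G v < d + ((n : ℝ) + 1)⁻¹ := by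
      intro n
      obtain ⟨x, ⟨v, rfl⟩, hx⟩ := exists_lt_of_csInf_lt hne
        (lt_add_of_pos_right d (show (0:ℝ) < ((n : ℝ) + 1)⁻¹ by positivity))
      exact ⟨v, hx⟩
    choose V hV using hseq
    have hpair : ∀ m n : ℕ, (∫ p, ‖F (V m) p - F (V n) p‖ ^ 2 ∂μ)
        ≤ 8 / α * (((m : ℝ) + 1)⁻¹ + ((n : ℝ) + 1)⁻¹) := by
      intro m n
      have h := hmid (V m) (V n)
      have h1 := hdle (fun i => (2⁻¹ : ℝ) • (V m i + V n i))
      have h2 := hV m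
      have h3 := hV n
      have hstep : α / 8 * (∫ p, ‖F (V m) p - F (V n) p‖ ^ 2 ∂μ)
          ≤ 2⁻¹ * (((m : ℝ) + 1)⁻¹ + ((n : ℝ) + 1)⁻¹) := by linarith
      have h8 : (0:ℝ) < 8 / α := by positivity
      have h98 : (8:ℝ) / α * (α / 8) = 1 := by
        field_simp
      calc (∫ p, ‖F (V m) p - F (V n) p‖ ^ 2 ∂μ)
          = 8 / α * (α / 8 * (∫ p, ‖F (V m) p - F (V n) p‖ ^ 2 ∂μ)) := by
            rw [← mul_assoc, h98, one_mul]
        _ ≤ 8 / α * (2⁻¹ * (((m : ℝ) + 1)⁻¹ + ((n : ℝ) + 1)⁻¹)) :=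
            mul_le_mul_of_nonneg_left hstep h8.le
        _ ≤ 8 / α * (((m : ℝ) + 1)⁻¹ + ((n : ℝ) + 1)⁻¹) := by
            apply mul_le_mul_of_nonneg_left _ h8.le
            have : (0:ℝ) ≤ ((m : ℝ) + 1)⁻¹ + ((n : ℝ) + 1)⁻¹ := by positivity
            linarith
    have hcomp : ∀ (m n : ℕ) (i : Fin r), dist (V m i) (V n i) ^ 2
        ≤ CQ * (8 / α) * (((m : ℝ) + 1)⁻¹ + ((n : ℝ) + 1)⁻¹) := by
      intro m n i
      have h1 := hCQ' (V m - V n) i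
      have hpt : ∀ p, ‖F (V m - V n) p‖ ^ 2 = ‖F (V m) p - F (V n) p‖ ^ 2 := fun p => by
        rw [← hFsub (V m) (V n) p]
      have heq : (∫ p, ‖F (V m - V n) p‖ ^ 2 ∂μ)
          = ∫ p, ‖F (V m) p - F (V n) p‖ ^ 2 ∂μ :=
        integral_congr_ae (Eventually.of_forall hpt)
      rw [heq] at h1
      have h2 := hpair m n
      rw [dist_eq_norm]
      calc ‖V m i - V n i‖ ^ 2 = ‖(V m - V n) i‖ ^ 2 := rfl
        _ ≤ CQ * ∫ p, ‖F (V m) p - F (V n) p‖ ^ 2 ∂μ := h1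
        _ ≤ CQ * (8 / α * (((m : ℝ) + 1)⁻¹ + ((n : ℝ) + 1)⁻¹)) :=
            mul_le_mul_of_nonneg_left h2 hCQ0
        _ = CQ * (8 / α) * (((m : ℝ) + 1)⁻¹ + ((n : ℝ) + 1)⁻¹) := by ring
    have hcauchy : ∀ i : Fin r, CauchySeq (fun n => V n i) := by
      intro i
      rw [Metric.cauchySeq_iff]
      intro ε hε
      obtain ⟨N, hN⟩ := exists_nat_gt (CQ * (8 / α) * 2 / ε ^ 2)
      refine ⟨N, fun m hm n hn => ?_⟩
      have hd2 := hcomp m n i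
      have hA0 : 0 ≤ CQ * (8 / α) := mul_nonneg hCQ0 (by positivity)
      have hNpos : (0:ℝ) < (N : ℝ) + 1 := by positivity
      have hinvm : ((m : ℝ) + 1)⁻¹ ≤ ((N : ℝ) + 1)⁻¹ := by
        apply inv_anti₀ hNpos
        have : (N : ℝ) ≤ (m : ℝ) := Nat.cast_le.2 hm
        linarith
      have hinvn : ((n : ℝ) + 1)⁻¹ ≤ ((N : ℝ) + 1)⁻¹ := by
        apply inv_anti₀ hNpos
        have : (N : ℝ) ≤ (n : ℝ) := Nat.cast_le.2 hn
        linarith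
      have hb : CQ * (8 / α) * (((m : ℝ) + 1)⁻¹ + ((n : ℝ) + 1)⁻¹) < ε ^ 2 := by
        have hstep1 : CQ * (8 / α) * (((m : ℝ) + 1)⁻¹ + ((n : ℝ) + 1)⁻¹)
            ≤ CQ * (8 / α) * (2 * ((N : ℝ) + 1)⁻¹) := by
          apply mul_le_mul_of_nonneg_left _ hA0
          linarith
        have hstep2 : CQ * (8 / α) * 2 < ε ^ 2 * ((N : ℝ) + 1) := by
          have hε2 : (0:ℝ) < ε ^ 2 := by positivity
          rw [div_lt_iff₀ hε2] at hN
          calc CQ * (8 / α) * 2 < N * ε ^ 2 := hN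
            _ ≤ ε ^ 2 * ((N : ℝ) + 1) := by nlinarith [hε2]
        have hstep3 : CQ * (8 / α) * (2 * ((N : ℝ) + 1)⁻¹) < ε ^ 2 := by
          have := (div_lt_iff₀ hNpos).2 hstep2
          calc CQ * (8 / α) * (2 * ((N : ℝ) + 1)⁻¹)
              = CQ * (8 / α) * 2 / ((N : ℝ) + 1) := by ring
            _ < ε ^ 2 := this
        linarith
      have hfin : dist (V m i) (V n i) ^ 2 < ε ^ 2 := lt_of_le_of_lt hd2 hb
      nlinarith [dist_nonneg (x := V m i) (y := V n i), hε]
    have hVlim : ∀ i : Fin r, ∃ L : U, Tendsto (fun n => V n i) atTop (𝓝 L) :=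
      fun i => cauchySeq_tendsto_of_complete (hcauchy i)
    choose vD hvD using hVlim
    refine ⟨vD, ?_⟩
    have hGd : G vD ≤ d := by
      have hstep : ∀ n : ℕ, G vD ≤ d + ((n : ℝ) + 1)⁻¹
          + ∑ i, |Cb vD i| * ‖V n i - vD i‖ := by
        intro n
        have h1 := hGineq vD (V n)
        have hpt : ∀ p, ⟪g (F vD p) p, F (V n) p - F vD p⟫
            = ⟪g (F vD p) p, F (V n - vD) p⟫ := fun p => by rw [hFsub (V n) vD p]
        have heq1 : (∫ p, ⟪g (F vD p) p, F (V n) p - F vD p⟫ ∂μ)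
            = ∑ i, ∫ p, lam i p * ⟪g (F vD p) p, (V n - vD) i⟫ ∂μ := by
          rw [integral_congr_ae (Eventually.of_forall hpt)]
          exact hsplit vD (V n - vD)
        rw [heq1] at h1
        have hsumb : -(∑ i, |Cb vD i| * ‖V n i - vD i‖)
            ≤ ∑ i, ∫ p, lam i p * ⟪g (F vD p) p, (V n - vD) i⟫ ∂μ := by
          apply neg_le_of_abs_le
          calc |∑ i, ∫ p, lam i p * ⟪g (F vD p) p, (V n - vD) i⟫ ∂μ|
              ≤ ∑ i, |∫ p, lam i p * ⟪g (F vD p) p, (V n - vD) i⟫ ∂μ| :=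
                Finset.abs_sum_le_sum_abs _ _
            _ ≤ ∑ i, |Cb vD i| * ‖V n i - vD i‖ := by
                apply Finset.sum_le_sum
                intro i _
                calc |∫ p, lam i p * ⟪g (F vD p) p, (V n - vD) i⟫ ∂μ|
                    ≤ Cb vD i * ‖(V n - vD) i‖ := hCb vD i ((V n - vD) i)
                  _ ≤ |Cb vD i| * ‖(V n - vD) i‖ :=
                      mul_le_mul_of_nonneg_right (le_abs_self _) (norm_nonneg _)
                  _ = |Cb vD i| * ‖V n i - vD i‖ := rfl
        have hquad : 0 ≤ α / 2 * ∫ p, ‖F (V n) p - F vD p‖ ^ 2 ∂μ :=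
          mul_nonneg (by linarith) (integral_nonneg fun p => sq_nonneg _)
        have h2 := hV n
        linarith
      have t1 : Tendsto (fun n : ℕ => ((n : ℝ) + 1)⁻¹) atTop (𝓝 0) :=
        tendsto_one_div_add_atTop_nhds_zero_nat.congr (by intro n; simp [one_div])
      have t2 : ∀ i : Fin r, Tendsto (fun n => ‖V n i - vD i‖) atTop (𝓝 0) := by
        intro i
        have h3 : Tendsto (fun n => V n i - vD i) atTop (𝓝 (vD i - vD i)) :=
          (hvD i).sub tendsto_const_nhds
        rw [sub_self] at h3
        simpa using h3.norm
      have t3 : Tendsto (fun n : ℕ => ∑ i, |Cb vD i| * ‖V n i - vD i‖) atTop (𝓝 0) := by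
        have := tendsto_finset_sum Finset.univ
          (fun (i : Fin r) (_ : i ∈ Finset.univ) => (t2 i).const_mul (|Cb vD i|))
        simpa using this
      have htends : Tendsto (fun n : ℕ => d + ((n : ℝ) + 1)⁻¹
          + ∑ i, |Cb vD i| * ‖V n i - vD i‖) atTop (𝓝 d) := by
        have := ((tendsto_const_nhds (x := d) (f := atTop)).add t1).add t3
        simpa using this
      exact ge_of_tendsto' htends hstep
    intro v
    exact le_trans hGd (hdle v)
  obtain ⟨vL, hvL⟩ := hexist
  refine ⟨⟨vL, hvL, fun y hy => huniq y vL hy hvL⟩, fun vstar => ⟨charA vstar, charB vstar⟩⟩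
end
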